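/- Let N be a project network and let k be a positive integer with k ≤ k_max. Then every k-crashing plan of N has cost at least k times the minimum cost of a 1-crashing plan of N. -/

import Mathlib

noncomputable section
open scoped Classical
open Finset

/-- A project network: a finite DAG (witnessed by a rank function) with a single
source `s` and a single sink `t`; each edge `e` carries a minimum length `a e`,
a normal length `b e`, and a nonnegative cost slope `c e`. -/
structure Project where
  V : Type
  E : Type
  [instFV : Fintype V]
  [instDV : DecidableEq V]
  [instFE : Fintype E]
  [instDE : DecidableEq E]
  src : E → V
  dst : E → V
  s : V
  t : V
  a : E → ℤ
  b : E → ℤ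
  c : E → ℝ
  length_lb : ∀ e, a e ≤ b e
  cost_nonneg : ∀ e, 0 ≤ c e
  rank : V → ℕ
  acyclic : ∀ e, rank (src e) < rank (dst e)
  s_no_in : ∀ e, dst e ≠ s
  t_no_out : ∀ e, src e ≠ t
  source_unique : ∀ v, v ≠ s → ∃ e, dst e = v
  sink_unique : ∀ v, v ≠ t → ∃ e, src e = v

attribute [instance] Project.instFV Project.instDV Project.instFE Project.instDE

namespace Project

/-- A network state: a subset of the edges together with current edge lengths. -/
structure State (P : Project) where
  edges : Finset P.E
  len : P.E → ℤ

variable (P : Project)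

/-- `es` is a directed path from the source `s` to the sink `t` using edges of `H`. -/
def IsPath (H : State P) (es : List P.E) : Prop :=
  es ≠ [] ∧ (∀ e ∈ es, e ∈ H.edges) ∧
  List.Chain' (fun e f => P.dst e = P.src f) es ∧
  (∀ e ∈ es.head?, P.src e = P.s) ∧ (∀ e ∈ es.getLast?, P.dst e = P.t)

/-- The length of a path in state `H`. -/
def pathLen (H : State P) (es : List P.E) : ℤ := (es.map H.len).sum

/-- The duration of `H`: the maximum total length of a directed `s`-`t` path. -/
def duration (H : State P) : ℤ :=
  sSup {L : ℤ | ∃ es, IsPath P H es ∧ pathLen P H es = L}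

/-- The critical graph `H*`: the edges of `H` lying on some maximum-length path. -/
def critical (H : State P) : State P :=
  ⟨H.edges.filter (fun e => ∃ es, IsPath P H es ∧ pathLen P H es = duration P H ∧ e ∈ es),
   H.len⟩

/-- An accelerate plan is feasible if each edge is shortened by at most `b e - a e`. -/
def Feasible (X : P.E → ℕ) : Prop := ∀ e, (X e : ℤ) ≤ P.b e - P.a e

/-- The original network `N` (all edges, with their normal lengths). -/
def base : State P := ⟨Finset.univ, P.b⟩

/-- The accelerated network `N(X)`, whose edge lengths are `b e - X e`. -/
def applyPlan (X : P.E → ℕ) : State P := ⟨Finset.univ, fun e => P.b e - X e⟩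

/-- The cost of a plan: `∑ e, c e * x e`. -/
def cost (X : P.E → ℕ) : ℝ := ∑ e, P.c e * (X e : ℝ)

/-- The cost of a set of edges: the sum of their cost slopes. -/
def costSet (C : Finset P.E) : ℝ := ∑ e ∈ C, P.c e

/-- `X` is a `k`-crashing plan of `N`: it is feasible and shortens the duration by `k`. -/
def Crashing (k : ℤ) (X : P.E → ℕ) : Prop :=
  Feasible P X ∧ duration P (applyPlan P X) ≤ duration P (base P) - k

/-- The plan shortening every edge maximally. -/
def fullPlan : P.E → ℕ := fun e => (P.b e - P.a e).toNat

/-- `k_max = d(N) - d(N(X_full))`. -/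
def kmax : ℤ := duration P (base P) - duration P (applyPlan P (fullPlan P))

/-- `C` is the cut of `H` determined by the vertex partition `(S, Sᶜ)` with `s ∈ S`, `t ∉ S`. -/
def IsCutWith (H : State P) (S : Finset P.V) (C : Finset P.E) : Prop :=
  P.s ∈ S ∧ P.t ∉ S ∧ C = H.edges.filter (fun e => P.src e ∈ S ∧ P.dst e ∉ S)

/-- `C` is a cut of `H`. -/
def IsCut (H : State P) (C : Finset P.E) : Prop := ∃ S, IsCutWith P H S C

/-- The plan `X` contains a cut of `H` (some cut lies inside the support of `X`). -/
def PlanContainsCut (H : State P) (X : P.E → ℕ) : Prop :=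
  ∃ C, IsCut P H C ∧ ∀ e ∈ C, 1 ≤ X e

/-- The edge set `D` contains a cut of `H`. -/
def ContainsCut (H : State P) (D : Finset P.E) : Prop :=
  ∃ C, IsCut P H C ∧ C ⊆ D

/-- `C = mincut(H, X)`: a minimum-cost cut of `H` among all cuts contained in `X`. -/
def IsMinCutIn (H : State P) (X : P.E → ℕ) (C : Finset P.E) : Prop :=
  IsCut P H C ∧ (∀ e ∈ C, 1 ≤ X e) ∧
  ∀ C', IsCut P H C' → (∀ e ∈ C', 1 ≤ X e) → costSet P C ≤ costSet P C'

/-- `H(C)`: the state `H` with every edge of `C` shortened by `1`. -/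
def shorten (H : State P) (C : Finset P.E) : State P :=
  ⟨H.edges, fun e => H.len e - if e ∈ C then 1 else 0⟩

/-- The decomposition `N_i, X_i, C_i` associated to a `k`-crashing plan `X`:
`N_1 = N`, `X_1 = X`, `C_i = mincut(N_i*, X_i)`, and for `1 < i ≤ k`,
`N_i = N_{i-1}*(C_{i-1})` and `X_i = X_{i-1} ∖ C_{i-1}`. -/
def Decomp (X : P.E → ℕ) (k : ℕ) (Ns : ℕ → State P) (Xs : ℕ → P.E → ℕ)
    (Cs : ℕ → Finset P.E) : Prop :=
  Ns 1 = base P ∧ Xs 1 = X ∧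
  (∀ i, 1 ≤ i → i ≤ k → IsMinCutIn P (critical P (Ns i)) (Xs i) (Cs i)) ∧
  ∀ i, 1 < i → i ≤ k →
    Ns i = shorten P (critical P (Ns (i - 1))) (Cs (i - 1)) ∧
    Xs i = fun e => Xs (i - 1) e - if e ∈ Cs (i - 1) then 1 else 0

/-- The edges of `H` within the vertex set `S`. -/
def withinEdges (H : State P) (S : Finset P.V) : Finset P.E :=
  H.edges.filter (fun e => P.src e ∈ S ∧ P.dst e ∈ S)

/-- The edges of `H` within the complement of the vertex set `S`. -/
def outsideEdges (H : State P) (S : Finset P.V) : Finset P.E :=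
  H.edges.filter (fun e => P.src e ∉ S ∧ P.dst e ∉ S)

/-- The edges of `H` going from the complement of `S` back into `S`. -/
def reverseCut (H : State P) (S : Finset P.V) : Finset P.E :=
  H.edges.filter (fun e => P.src e ∉ S ∧ P.dst e ∈ S)

/-- `Z` is an `m`-crashing plan of the accelerated network `N(Y)`. -/
def CrashesBy (Y Z : P.E → ℕ) (m : ℤ) : Prop :=
  Feasible P (fun e => Y e + Z e) ∧
  duration P (applyPlan P (fun e => Y e + Z e)) ≤ duration P (applyPlan P Y) - m

/-- `Z` is a minimum-cost `1`-crashing plan of the accelerated network `N(Y)`. -/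
def MinOneCrashOf (Y Z : P.E → ℕ) : Prop :=
  CrashesBy P Y Z 1 ∧ ∀ Z', CrashesBy P Y Z' 1 → cost P Z ≤ cost P Z'

end Project

namespace KC
open Project

variable (P : Project)

/-- end vertex of a prefix list of edges (source `s` if empty) -/
def endV (q : List P.E) : P.V := q.getLast?.elim P.s P.dst

@[simp] lemma endV_nil : endV P ([] : List P.E) = P.s := rfl

@[simp] lemma endV_concat (l : List P.E) (a : P.E) : endV P (l ++ [a]) = P.dst a := by
  simp [endV, List.getLast?_concat]

def Crit (es : List P.E) : Prop :=
  IsPath P (base P) es ∧ pathLen P (base P) es = duration P (base P)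

def PrefTo (u : P.V) (q : List P.E) : Prop :=
  endV P q = u ∧ ∃ r, Crit P (q ++ r)

def mm (X : P.E → ℕ) (u : P.V) : ℕ :=
  sInf {n | ∃ q, PrefTo P u q ∧ (q.map X).sum = n}

def YY (X : P.E → ℕ) (j : ℕ) (e : P.E) : ℕ :=
  if mm P X (P.src e) < j ∧ j ≤ mm P X (P.src e) + X e then 1 else 0

lemma isPath_transfer (H H' : State P) (h : H.edges = H'.edges) (es : List P.E) :
    IsPath P H es ↔ IsPath P H' es := by unfold IsPath; rw [h]

lemma pathLen_append (H : State P) (u v : List P.E) :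
    pathLen P H (u ++ v) = pathLen P H u + pathLen P H v := by
  simp [pathLen]

lemma pathLen_apply (X : P.E → ℕ) (es : List P.E) :
    pathLen P (applyPlan P X) es = pathLen P (base P) es - ((es.map X).sum : ℤ) := by
  induction es with
  | nil => simp [pathLen]
  | cons e es ih =>
      simp only [pathLen, List.map_cons, List.sum_cons] at *
      push_cast
      push_cast at ih
      simp only [applyPlan, base] at *
      linarith

lemma isPath_nodup {H : State P} {es : List P.E} (h : IsPath P H es) : es.Nodup := by
  have hch : List.Chain' (· < ·) (es.map (fun e => P.rank (P.src e))) := by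
    unfold List.Chain'; rw [List.isChain_map]
    exact List.IsChain.imp (R := fun e f => P.dst e = P.src f) (@fun a b hab => by
      have := P.acyclic a; rw [hab] at this; exact this) h.2.2.1
  have := List.isChain_iff_pairwise.mp hch
  exact List.Nodup.of_map _ (this.imp ne_of_lt)

lemma bddAbove_paths (H : State P) :
    BddAbove {L : ℤ | ∃ es, IsPath P H es ∧ pathLen P H es = L} := by
  refine ⟨∑ e : P.E, max (H.len e) 0, ?_⟩
  rintro L ⟨es, hp, rfl⟩
  have hnd := isPath_nodup P hp
  calc pathLen P H es = ∑ e ∈ es.toFinset, H.len e := (List.sum_toFinset _ hnd).symm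
    _ ≤ ∑ e ∈ es.toFinset, max (H.len e) 0 := Finset.sum_le_sum (fun e _ => le_max_left _ _)
    _ ≤ ∑ e : P.E, max (H.len e) 0 :=
        Finset.sum_le_sum_of_subset_of_nonneg (Finset.subset_univ _)
          (fun e _ _ => le_max_right _ _)

lemma le_duration {H : State P} {es : List P.E} (h : IsPath P H es) :
    pathLen P H es ≤ duration P H :=
  le_csSup (bddAbove_paths P H) ⟨es, h, rfl⟩

lemma duration_le {H : State P} {M : ℤ} (hne : ∃ es, IsPath P H es)
    (hb : ∀ es, IsPath P H es → pathLen P H es ≤ M) : duration P H ≤ M := by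
  obtain ⟨es, hes⟩ := hne
  exact csSup_le ⟨_, es, hes, rfl⟩ (by rintro L ⟨es, h, rfl⟩; exact hb es h)


lemma endV_last {q : List P.E} {x : P.E} (h : q.getLast? = some x) :
    P.dst x = endV P q := by simp [endV, h]

lemma splice_path (q r q' r' : List P.E) (h1 : IsPath P (base P) (q ++ r))
    (h2 : IsPath P (base P) (q' ++ r')) (he : endV P q = endV P q') :
    IsPath P (base P) (q' ++ r) := by
  obtain ⟨hne1, -, hch1, hhd1, hlt1⟩ := h1
  obtain ⟨hne2, -, hch2, hhd2, hlt2⟩ := h2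
  have hst : P.s ≠ P.t := by
    obtain ⟨e0, l0, h0⟩ := List.exists_cons_of_ne_nil hne1
    have hs := hhd1 e0 (by rw [h0]; rfl)
    rw [← hs]; exact P.t_no_out e0
  unfold List.Chain' at hch1 hch2
  rw [List.isChain_append] at hch1 hch2
  -- link from endV q into r
  have hlink : ∀ y ∈ r.head?, P.src y = endV P q := by
    intro y hy
    rcases q.eq_nil_or_concat with rfl | ⟨l, a, rfl⟩
    · simpa using (hhd1 y (by simpa using hy))
    · have := hch1.2.2 a (by simp [List.getLast?_concat]) y hy
      simp only [List.concat_eq_append, endV_concat]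
      exact this.symm
  -- endV q = t when r = []
  have hqt : r = [] → endV P q = P.t := by
    rintro rfl
    have hq : q ≠ [] := by simpa using hne1
    rcases q.eq_nil_or_concat with rfl | ⟨l, a, rfl⟩
    · exact absurd rfl hq
    · have := hlt1 a (by simp [List.getLast?_concat])
      simp only [List.concat_eq_append, endV_concat]
      exact this
  refine ⟨?_, ?_, ?_, ?_, ?_⟩
  · -- nonempty
    intro hqr
    rcases List.append_eq_nil_iff.mp hqr with ⟨rfl, rfl⟩
    have h1 : endV P q = P.t := hqt rfl
    rw [he] at h1
    simp only [endV_nil] at h1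
    exact hst h1
  · intro e _; simp [base]
  · unfold List.Chain'; rw [List.isChain_append]
    refine ⟨hch2.1, hch1.2.1, ?_⟩
    intro x hx y hy
    rw [endV_last P hx, ← he]
    exact (hlink y hy).symm
  · intro e hee
    rcases q' with _ | ⟨c, q0⟩
    · have : P.src e = endV P q := hlink e (by simpa using hee)
      rw [this, he]; rfl
    · have hce : c = e := by simpa using hee
      subst hce
      exact hhd2 c rfl
  · intro e hee
    rcases r.eq_nil_or_concat with rfl | ⟨l, a, rfl⟩
    · have h1 : endV P q' = P.t := by rw [← he]; exact hqt rfl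
      rw [List.append_nil] at hee
      rw [← endV_last P hee] at h1
      exact h1
    · have h2 : a = e := by
        have h3 : (q' ++ l.concat a).getLast? = some a := by
          rw [List.concat_eq_append, ← List.append_assoc]
          exact List.getLast?_concat
        rw [h3] at hee; simpa using hee
      subst h2
      refine hlt1 a ?_
      have h4 : (q ++ l.concat a).getLast? = some a := by
        rw [List.concat_eq_append, ← List.append_assoc]
        exact List.getLast?_concat
      rw [h4]; rfl

lemma splice (q r q' r' : List P.E) (h1 : Crit P (q ++ r)) (h2 : Crit P (q' ++ r'))
    (he : endV P q = endV P q') : Crit P (q' ++ r) := by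
  have hp : IsPath P (base P) (q' ++ r) := splice_path P q r q' r' h1.1 h2.1 he
  have hp' : IsPath P (base P) (q ++ r') := splice_path P q' r' q r h2.1 h1.1 he.symm
  refine ⟨hp, ?_⟩
  have l1 := le_duration P hp
  have l2 := le_duration P hp'
  have e1 := h1.2
  have e2 := h2.2
  rw [pathLen_append] at l1 l2 e1 e2 ⊢
  linarith

lemma mm_step (X : P.E → ℕ) (q : List P.E) (e : P.E) (r : List P.E)
    (h : Crit P (q ++ e :: r)) : mm P X (P.dst e) ≤ mm P X (endV P q) + X e := by
  have hne : {n | ∃ q0, PrefTo P (endV P q) q0 ∧ (q0.map X).sum = n}.Nonempty :=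
    ⟨_, q, ⟨rfl, e :: r, h⟩, rfl⟩
  obtain ⟨q0, ⟨he0, r0, hc0⟩, hs0⟩ := Nat.sInf_mem hne
  have hcs : Crit P (q0 ++ e :: r) := splice P q (e :: r) q0 r0 h hc0 he0.symm
  have hpref : PrefTo P (P.dst e) (q0 ++ [e]) := by
    refine ⟨by simp, r, ?_⟩
    rw [List.append_assoc]; exact hcs
  calc mm P X (P.dst e) ≤ ((q0 ++ [e]).map X).sum := Nat.sInf_le ⟨q0 ++ [e], hpref, rfl⟩
    _ = mm P X (endV P q) + X e := by simp [hs0]; rfl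

lemma mm_s (X : P.E → ℕ) (hc : ∃ es, Crit P es) : mm P X P.s = 0 := by
  obtain ⟨es, hes⟩ := hc
  exact Nat.eq_zero_of_le_zero (Nat.sInf_le ⟨[], ⟨rfl, es, hes⟩, rfl⟩)

end KC

/-- every `k`-crashing plan costs at least `k` times the minimum
cost of a `1`-crashing plan. -/
theorem kCrashing_cost_lower_bound (P : Project) (k : ℕ) (hk : 1 ≤ k)
    (hkmax : (k : ℤ) ≤ Project.kmax P)
    (X : P.E → ℕ) (hX : Project.Crashing P (k : ℤ) X)
    (A : P.E → ℕ) (hA1 : Project.Crashing P 1 A)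
    (hAmin : ∀ Y, Project.Crashing P 1 Y → Project.cost P A ≤ Project.cost P Y) :
    (k : ℝ) * Project.cost P A ≤ Project.cost P X := by
  classical
  obtain ⟨hXf, hXd⟩ := hX
  have htrans : ∀ (Y : P.E → ℕ) es,
      Project.IsPath P (Project.applyPlan P Y) es ↔ Project.IsPath P (Project.base P) es :=
    fun Y es => KC.isPath_transfer P _ _ rfl es
  have hex : ∃ es, Project.IsPath P (Project.base P) es := by
    by_contra hno
    push_neg at hno
    have hb : Project.duration P (Project.base P) = 0 := by
      have hempty : {L : ℤ | ∃ es, Project.IsPath P (Project.base P) es ∧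
          Project.pathLen P (Project.base P) es = L} = ∅ := by
        ext L
        simp only [Set.mem_setOf_eq, Set.mem_empty_iff_false, iff_false, not_exists]
        rintro es ⟨hp, -⟩
        exact hno es hp
      unfold Project.duration
      rw [hempty, Int.csSup_empty]
    have ha : Project.duration P (Project.applyPlan P X) = 0 := by
      have hempty : {L : ℤ | ∃ es, Project.IsPath P (Project.applyPlan P X) es ∧
          Project.pathLen P (Project.applyPlan P X) es = L} = ∅ := by
        ext L
        simp only [Set.mem_setOf_eq, Set.mem_empty_iff_false, iff_false, not_exists]
        rintro es ⟨hp, -⟩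
        exact hno es ((htrans X es).mp hp)
      unfold Project.duration
      rw [hempty, Int.csSup_empty]
    rw [hb, ha] at hXd
    omega
  obtain ⟨p0, hp0⟩ := hex
  have hcrit_ex : ∃ es, KC.Crit P es := by
    have hmem : Project.duration P (Project.base P) ∈
        {L : ℤ | ∃ es, Project.IsPath P (Project.base P) es ∧
          Project.pathLen P (Project.base P) es = L} :=
      Int.csSup_mem ⟨_, p0, hp0, rfl⟩ (KC.bddAbove_paths P _)
    obtain ⟨es, h1, h2⟩ := hmem
    exact ⟨es, h1, h2⟩
  obtain ⟨pc, hpc⟩ := hcrit_ex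
  have mm_s : KC.mm P X P.s = 0 := KC.mm_s P X ⟨pc, hpc⟩
  have crit_sum : ∀ es, KC.Crit P es → (k : ℤ) ≤ ((es.map X).sum : ℤ) := by
    rintro es ⟨hp, hl⟩
    have h1 : Project.pathLen P (Project.applyPlan P X) es ≤
        Project.duration P (Project.base P) - k :=
      le_trans (KC.le_duration P ((htrans X es).mpr hp)) hXd
    rw [KC.pathLen_apply, hl] at h1
    linarith
  have hpct : KC.endV P pc = P.t := by
    rcases pc.eq_nil_or_concat with rfl | ⟨l, a, rfl⟩
    · exact absurd rfl hpc.1.1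
    · have := hpc.1.2.2.2.2 a (by simp [List.getLast?_concat])
      simp only [List.concat_eq_append, KC.endV_concat]
      exact this
  have mm_t : k ≤ KC.mm P X P.t := by
    refine le_csInf ⟨_, pc, ⟨hpct, [], by simpa using hpc⟩, rfl⟩ ?_
    rintro n ⟨q, ⟨hq, r, hcr⟩, rfl⟩
    rcases r with _ | ⟨y, r'⟩
    · rw [List.append_nil] at hcr
      exact_mod_cast crit_sum q hcr
    · exfalso
      have hsy : P.src y = KC.endV P q := by
        rcases q.eq_nil_or_concat with rfl | ⟨l, a, rfl⟩
        · exact hcr.1.2.2.2.1 y rfl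
        · have := (List.isChain_append.mp hcr.1.2.2.1).2.2 a
            (by simp [List.getLast?_concat]) y rfl
          simp only [List.concat_eq_append, KC.endV_concat]
          exact this.symm
      rw [hq] at hsy
      exact P.t_no_out y hsy
  have walk : ∀ (j : ℕ), 1 ≤ j → j ≤ k → ∀ r q, KC.Crit P (q ++ r) →
      KC.mm P X (KC.endV P q) < j →
      ∃ e ∈ r, KC.mm P X (P.src e) < j ∧ j ≤ KC.mm P X (P.src e) + X e := by
    intro j hj1 hjk r
    induction r with
    | nil =>
        intro q hcr hlt
        exfalso
        have hqt : KC.endV P q = P.t := by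
          rcases q.eq_nil_or_concat with rfl | ⟨l, a, rfl⟩
          · exact absurd (by simp) hcr.1.1
          · have := hcr.1.2.2.2.2 a (by simp [List.getLast?_concat])
            simp only [List.concat_eq_append, KC.endV_concat]
            exact this
        rw [hqt] at hlt
        omega
    | cons e r' ih =>
        intro q hcr hlt
        have hsrc : P.src e = KC.endV P q := by
          rcases q.eq_nil_or_concat with rfl | ⟨l, a, rfl⟩
          · exact hcr.1.2.2.2.1 e rfl
          · have := (List.isChain_append.mp hcr.1.2.2.1).2.2 a
              (by simp [List.getLast?_concat]) e rfl
            simp only [List.concat_eq_append, KC.endV_concat]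
            exact this.symm
        have hb := KC.mm_step P X q e r' hcr
        by_cases hj : j ≤ KC.mm P X (P.dst e)
        · exact ⟨e, List.mem_cons_self, by rw [hsrc]; exact hlt, by rw [hsrc]; omega⟩
        · push_neg at hj
          obtain ⟨f, hf, h1f, h2f⟩ := ih (q ++ [e])
            (by rw [List.append_assoc]; exact hcr)
            (by rw [KC.endV_concat]; exact hj)
          exact ⟨f, List.mem_cons_of_mem e hf, h1f, h2f⟩
  have cover : ∀ j, 1 ≤ j → j ≤ k → ∀ es, KC.Crit P es →
      1 ≤ (es.map (KC.YY P X j)).sum := by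
    intro j hj1 hjk es hes
    obtain ⟨e, he, h1e, h2e⟩ := walk j hj1 hjk es [] (by simpa using hes)
      (by rw [KC.endV_nil, mm_s]; omega)
    have hY1 : KC.YY P X j e = 1 := by simp only [KC.YY, if_pos (And.intro h1e h2e)]
    calc 1 = KC.YY P X j e := hY1.symm
      _ ≤ (es.map (KC.YY P X j)).sum :=
        List.single_le_sum (fun x _ => Nat.zero_le x) _ (List.mem_map_of_mem he)
  have hYcrash : ∀ j, 1 ≤ j → j ≤ k → Project.Crashing P 1 (KC.YY P X j) := by
    intro j hj1 hjk
    have hYle : ∀ e, KC.YY P X j e ≤ X e := by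
      intro e
      by_cases h : KC.mm P X (P.src e) < j ∧ j ≤ KC.mm P X (P.src e) + X e
      · simp only [KC.YY, if_pos h]
        omega
      · simp only [KC.YY, if_neg h]
        omega
    refine ⟨fun e => ?_, ?_⟩
    · calc (KC.YY P X j e : ℤ) ≤ (X e : ℤ) := by exact_mod_cast hYle e
        _ ≤ P.b e - P.a e := hXf e
    · apply KC.duration_le
      · exact ⟨p0, (htrans _ _).mpr hp0⟩
      · intro es hes
        rw [KC.pathLen_apply]
        have hpb := (htrans _ _).mp hes
        have h1 := KC.le_duration P hpb
        by_cases hc : Project.pathLen P (Project.base P) es = Project.duration P (Project.base P)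
        · have h2 := cover j hj1 hjk es ⟨hpb, hc⟩
          have h3 : (1:ℤ) ≤ ((es.map (KC.YY P X j)).sum : ℤ) := by exact_mod_cast h2
          linarith
        · have h3 : (0:ℤ) ≤ ((es.map (KC.YY P X j)).sum : ℤ) := Int.ofNat_nonneg _
          have h4 : Project.pathLen P (Project.base P) es ≤
              Project.duration P (Project.base P) - 1 := by omega
          linarith
  have key : ∀ e, (∑ j ∈ Finset.Icc 1 k, KC.YY P X j e) ≤ X e := by
    intro e
    have h1 : ∀ j ∈ Finset.Icc 1 k, KC.YY P X j e =
        if j ∈ Finset.Ioc (KC.mm P X (P.src e)) (KC.mm P X (P.src e) + X e) then 1 else 0 := by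
      intro j _
      simp only [KC.YY, Finset.mem_Ioc]
    calc ∑ j ∈ Finset.Icc 1 k, KC.YY P X j e
        = ∑ j ∈ Finset.Icc 1 k,
            if j ∈ Finset.Ioc (KC.mm P X (P.src e)) (KC.mm P X (P.src e) + X e) then 1 else 0 :=
          Finset.sum_congr rfl h1
      _ = ∑ j ∈ Finset.Icc 1 k ∩ Finset.Ioc (KC.mm P X (P.src e)) (KC.mm P X (P.src e) + X e),
            1 := Finset.sum_ite_mem _ _ _
      _ ≤ ∑ j ∈ Finset.Ioc (KC.mm P X (P.src e)) (KC.mm P X (P.src e) + X e), 1 :=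
          Finset.sum_le_sum_of_subset Finset.inter_subset_right
      _ = X e := by simp [Nat.card_Ioc]
  have hsum_comm : ∑ j ∈ Finset.Icc 1 k, Project.cost P (KC.YY P X j)
      = ∑ e : P.E, P.c e * ∑ j ∈ Finset.Icc 1 k, (KC.YY P X j e : ℝ) := by
    unfold Project.cost
    rw [Finset.sum_comm]
    exact Finset.sum_congr rfl (fun e _ => by rw [Finset.mul_sum])
  have hAcost : ∀ j ∈ Finset.Icc 1 k, Project.cost P A ≤ Project.cost P (KC.YY P X j) := by
    intro j hj
    obtain ⟨hj1, hjk⟩ := Finset.mem_Icc.mp hj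
    exact hAmin _ (hYcrash j hj1 hjk)
  calc (k:ℝ) * Project.cost P A = ∑ _j ∈ Finset.Icc 1 k, Project.cost P A := by
        rw [Finset.sum_const, Nat.card_Icc]
        simp [nsmul_eq_mul]
    _ ≤ ∑ j ∈ Finset.Icc 1 k, Project.cost P (KC.YY P X j) := Finset.sum_le_sum hAcost
    _ = ∑ e : P.E, P.c e * ∑ j ∈ Finset.Icc 1 k, (KC.YY P X j e : ℝ) := hsum_comm
    _ ≤ ∑ e : P.E, P.c e * (X e : ℝ) := by
        refine Finset.sum_le_sum (fun e _ => mul_le_mul_of_nonneg_left ?_ (P.cost_nonneg e))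
        calc ∑ j ∈ Finset.Icc 1 k, (KC.YY P X j e : ℝ)
            = ((∑ j ∈ Finset.Icc 1 k, KC.YY P X j e : ℕ) : ℝ) := (Nat.cast_sum _ _).symm
          _ ≤ (X e : ℝ) := by exact_mod_cast key e
    _ = Project.cost P X := rfl
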